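/- Let Q be a facet of P_a not contained in any coordinate hyperplane, with L_Q = (Σ_i β_i x_i)/m_Q where the β_i are integers with gcd 1 and m_Q is the smallest positive integer making m_Q·L_Q integral. Then the set of classes modulo Z of elements of R_Q equals the subgroup of Q/Z generated by 1/m_Q. -/

import Mathlib

open Set

namespace BS

def toR {n : ℕ} (u : Fin n → ℤ) : Fin n → ℝ := fun i => (u i : ℝ)

def natR {n : ℕ} (u : Fin n → ℕ) : Fin n → ℝ := fun i => (u i : ℝ)

def natZ {n : ℕ} (u : Fin n → ℕ) : Fin n → ℤ := fun i => (u i : ℤ)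

/-- `Γ` is the exponent set of a nonzero monomial ideal. -/
def IsMonIdeal {n : ℕ} (Γ : Set (Fin n → ℕ)) : Prop :=
  Γ.Nonempty ∧ ∀ u ∈ Γ, ∀ w : Fin n → ℕ, u + w ∈ Γ

/-- The Newton polyhedron: convex hull of the exponent set. -/
def newton {n : ℕ} (Γ : Set (Fin n → ℕ)) : Set (Fin n → ℝ) :=
  convexHull ℝ (natR '' Γ)

/-- The subsemigroup (containing 0) of ℤⁿ generated by differences u - v,
u ∈ Γ, v ∈ Γ ∩ Q. -/
def diffMonoid {n : ℕ} (Γ : Set (Fin n → ℕ)) (Q : Set (Fin n → ℝ)) :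
    AddSubmonoid (Fin n → ℤ) :=
  AddSubmonoid.closure {d | ∃ u ∈ Γ, ∃ v ∈ Γ, natR v ∈ Q ∧ d = natZ u - natZ v}

/-- M_Q : the translate by e = (1,...,1) of the difference semigroup. -/
def MQ {n : ℕ} (Γ : Set (Fin n → ℕ)) (Q : Set (Fin n → ℝ)) : Set (Fin n → ℤ) :=
  {m | m - 1 ∈ diffMonoid Γ Q}

/-- M_Q^{(k)} = k·v₀ + M_Q. -/
def MQk {n : ℕ} (Γ : Set (Fin n → ℕ)) (Q : Set (Fin n → ℝ)) (v0 : Fin n → ℕ) (k : ℕ) :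
    Set (Fin n → ℤ) :=
  {m | m - (k : ℤ) • natZ v0 ∈ MQ Γ Q}

/-- V_Q : linear span of the face Q. -/
def VQ {n : ℕ} (Q : Set (Fin n → ℝ)) : Submodule ℝ (Fin n → ℝ) := Submodule.span ℝ Q

/-- R_Q = { -L_Q(u) : u ∈ (M_Q \ M_Q') ∩ V_Q }. -/
def RQ {n : ℕ} (Γ : Set (Fin n → ℕ)) (Q : Set (Fin n → ℝ)) (v0 : Fin n → ℕ)
    (L : (Fin n → ℝ) →ₗ[ℝ] ℝ) : Set ℝ :=
  {x | ∃ u ∈ MQ Γ Q \ MQk Γ Q v0 1, toR u ∈ VQ Q ∧ x = - L (toR u)}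

/-- Q is contained in some coordinate hyperplane. -/
def InCoordHyp {n : ℕ} (Q : Set (Fin n → ℝ)) : Prop := ∃ i, ∀ q ∈ Q, q i = 0

/-- The subgroup G_Q of ℤⁿ generated by differences of elements of Γ ∩ Q. -/
def diffGroup {n : ℕ} (Γ : Set (Fin n → ℕ)) (Q : Set (Fin n → ℝ)) :
    AddSubgroup (Fin n → ℤ) :=
  AddSubgroup.closure
    {d | ∃ u ∈ Γ, natR u ∈ Q ∧ ∃ v ∈ Γ, natR v ∈ Q ∧ d = natZ u - natZ v}

end BS

section Aux

lemma bezout_finset {ι : Type*} [DecidableEq ι] (s : Finset ι) (f : ι → ℤ) :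
    ∃ c : ι → ℤ, ∑ i ∈ s, c i * f i = s.gcd f := by
  classical
  induction s using Finset.induction with
  | empty => exact ⟨0, by simp⟩
  | @insert a s ha ih =>
    obtain ⟨c, hc⟩ := ih
    rw [Finset.gcd_insert]
    obtain ⟨u, v, huv⟩ : ∃ u v : ℤ, u * f a + v * s.gcd f = GCDMonoid.gcd (f a) (s.gcd f) := by
      have h2 := Int.gcd_eq_gcd_ab (f a) (s.gcd f)
      refine ⟨Int.gcdA (f a) (s.gcd f), Int.gcdB (f a) (s.gcd f), ?_⟩
      rw [← Int.coe_gcd, h2]; ring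
    refine ⟨Function.update (fun i => v * c i) a u, ?_⟩
    have h1 : ∑ i ∈ s, Function.update (fun i => v * c i) a u i * f i
        = ∑ i ∈ s, v * (c i * f i) :=
      Finset.sum_congr rfl (fun i hi => by
        rw [Function.update_of_ne (fun h : i = a => ha (h ▸ hi)), mul_assoc])
    rw [Finset.sum_insert ha, Function.update_self, h1, ← Finset.mul_sum, hc, ← huv]

lemma BS.toR_add {n : ℕ} (a b : Fin n → ℤ) : BS.toR (a + b) = BS.toR a + BS.toR b := by
  funext i; simp [BS.toR]

lemma BS.toR_sub {n : ℕ} (a b : Fin n → ℤ) : BS.toR (a - b) = BS.toR a - BS.toR b := by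
  funext i; simp [BS.toR]

lemma BS.toR_natZ {n : ℕ} (u : Fin n → ℕ) : BS.toR (BS.natZ u) = BS.natR u := by
  funext i; simp [BS.toR, BS.natZ, BS.natR]

lemma BS.toR_zero {n : ℕ} : BS.toR (0 : Fin n → ℤ) = 0 := by
  funext i; simp [BS.toR]

end Aux

/-- For a facet Q with L_Q = (Σ βᵢ xᵢ)/m_Q, gcd(βᵢ) = 1: the classes mod ℤ of the
elements of R_Q form the subgroup of ℚ/ℤ generated by 1/m_Q. -/
theorem RQ_classes_mod_Z {n : ℕ} (Γ : Set (Fin n → ℕ)) (hΓ : BS.IsMonIdeal Γ)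
    (hproper : (0 : Fin n → ℕ) ∉ Γ)
    (Q : Set (Fin n → ℝ)) (hface : IsExposed ℝ (BS.newton Γ) Q)
    (hnc : ¬ BS.InCoordHyp Q)
    (L : (Fin n → ℝ) →ₗ[ℝ] ℝ) (hL1 : ∀ q ∈ Q, L q = 1)
    (hLge : ∀ x ∈ BS.newton Γ, 1 ≤ L x)
    (hQeq : Q = BS.newton Γ ∩ {x | L x = 1})
    (hspan : BS.VQ Q = ⊤)
    (v0 : Fin n → ℕ) (hv0 : v0 ∈ Γ) (hv0Q : BS.natR v0 ∈ Q)
    (β : Fin n → ℤ) (mQ : ℕ) (hmQ : 0 < mQ)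
    (hβ : ∀ x, L x = (∑ i, (β i : ℝ) * x i) / (mQ : ℝ))
    (hgcd : Finset.univ.gcd β = 1) :
    {x : ℝ | ∃ y ∈ BS.RQ Γ Q v0 L, ∃ k : ℤ, x = y + (k : ℝ)} =
      {x : ℝ | ∃ j k : ℤ, x = (j : ℝ) / (mQ : ℝ) + (k : ℝ)} := by
  classical
  have hmR : (mQ : ℝ) ≠ 0 := by positivity
  have Lint : ∀ u : Fin n → ℤ, L (BS.toR u) = ((∑ i, β i * u i : ℤ) : ℝ) / (mQ : ℝ) := by
    intro u
    rw [hβ]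
    congr 1
    push_cast [BS.toR]
    rfl
  -- L is nonnegative on the difference monoid
  have hdnn : ∀ d ∈ BS.diffMonoid Γ Q, 0 ≤ L (BS.toR d) := by
    intro d hd
    induction hd using AddSubmonoid.closure_induction with
    | mem d hdm =>
      obtain ⟨u, hu, v, hv, hvQ, rfl⟩ := hdm
      rw [BS.toR_sub, BS.toR_natZ, BS.toR_natZ, map_sub, hL1 _ hvQ]
      have h1 : (1:ℝ) ≤ L (BS.natR u) :=
        hLge _ (subset_convexHull ℝ _ ⟨u, hu, rfl⟩)
      linarith
    | zero => rw [BS.toR_zero, map_zero]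
    | add a b _ _ ha hb => rw [BS.toR_add, map_add]; linarith
  have hMQlb : ∀ m ∈ BS.MQ Γ Q, L (BS.toR (1 : Fin n → ℤ)) ≤ L (BS.toR m) := by
    intro m hm
    have h := hdnn _ hm
    rw [BS.toR_sub, map_sub] at h
    linarith
  have hLv0 : L (BS.toR (BS.natZ v0)) = 1 := by rw [BS.toR_natZ]; exact hL1 _ hv0Q
  -- descent to M_Q \ M_Q^{(1)}
  have descent : ∀ N : ℕ, ∀ m, m ∈ BS.MQ Γ Q →
      L (BS.toR m) ≤ L (BS.toR (1 : Fin n → ℤ)) + N →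
      ∃ u ∈ BS.MQ Γ Q \ BS.MQk Γ Q v0 1, ∃ t : ℤ, L (BS.toR u) = L (BS.toR m) - t := by
    intro N
    induction N with
    | zero =>
      intro m hm hb
      by_cases hmem : m ∈ BS.MQk Γ Q v0 1
      · exfalso
        have h1 : m - (1:ℤ) • BS.natZ v0 ∈ BS.MQ Γ Q := hmem
        have h2 := hMQlb _ h1
        rw [one_smul, BS.toR_sub, map_sub, hLv0] at h2
        push_cast at hb
        linarith
      · exact ⟨m, ⟨hm, hmem⟩, 0, by push_cast; ring⟩
    | succ N ih =>
      intro m hm hb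
      by_cases hmem : m ∈ BS.MQk Γ Q v0 1
      · have h1 : m - (1:ℤ) • BS.natZ v0 ∈ BS.MQ Γ Q := hmem
        rw [one_smul] at h1
        have hb' : L (BS.toR (m - BS.natZ v0)) ≤ L (BS.toR (1 : Fin n → ℤ)) + N := by
          rw [BS.toR_sub, map_sub, hLv0]
          push_cast at hb ⊢
          linarith
        obtain ⟨u, hu, t, ht⟩ := ih _ h1 hb'
        refine ⟨u, hu, t + 1, ?_⟩
        rw [ht, BS.toR_sub, map_sub, hLv0]
        push_cast
        ring
      · exact ⟨m, ⟨hm, hmem⟩, 0, by push_cast; ring⟩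
  ext x
  simp only [Set.mem_setOf_eq]
  constructor
  · rintro ⟨y, ⟨u, _, _, rfl⟩, k, rfl⟩
    refine ⟨-(∑ i, β i * u i), k, ?_⟩
    rw [Lint]
    push_cast
    ring
  · rintro ⟨j, k, rfl⟩
    obtain ⟨c, hc⟩ := bezout_finset Finset.univ β
    rw [hgcd] at hc
    set T : ℤ := -j - ∑ i, β i with hT
    set w : Fin n → ℕ := fun i => ((c i * T) % (mQ:ℤ)).toNat with hwdef
    have hmZ : (mQ : ℤ) ≠ 0 := by exact_mod_cast hmQ.ne'
    have hw : ∀ i, (w i : ℤ) = (c i * T) % (mQ:ℤ) := fun i =>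
      Int.toNat_of_nonneg (Int.emod_nonneg _ hmZ)
    -- the key congruence
    have hcong : (∑ i, β i * (w i : ℤ)) % (mQ:ℤ) = T % (mQ:ℤ) := by
      rw [Finset.sum_int_mod]
      have h1 : ∀ i ∈ Finset.univ, (β i * (w i : ℤ)) % (mQ:ℤ)
          = (β i * (c i * T)) % (mQ:ℤ) := by
        intro i _
        rw [Int.mul_emod, hw i, Int.emod_emod_of_dvd _ dvd_rfl, ← Int.mul_emod]
      rw [Finset.sum_congr rfl h1, ← Finset.sum_int_mod]
      have h2 : (∑ i, β i * (c i * T)) = T * ∑ i, c i * β i := by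
        rw [Finset.mul_sum]; exact Finset.sum_congr rfl (fun i _ => by ring)
      rw [h2, hc, mul_one]
    obtain ⟨s, hs⟩ : ∃ s : ℤ, ∑ i, β i * (w i : ℤ) = T + (mQ:ℤ) * s := by
      have hdvd : (mQ:ℤ) ∣ (∑ i, β i * (w i : ℤ)) - T := Int.ModEq.dvd (Int.ModEq.symm hcong)
      obtain ⟨s, hs⟩ := hdvd
      exact ⟨s, by linarith⟩
    set m₀ : Fin n → ℤ := (1 : Fin n → ℤ) + BS.natZ w with hm₀def
    have hm₀ : m₀ ∈ BS.MQ Γ Q := by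
      have heq : m₀ - 1 = BS.natZ (v0 + w) - BS.natZ v0 := by
        funext i
        simp only [hm₀def, BS.natZ, Pi.sub_apply, Pi.add_apply, Pi.one_apply]
        push_cast; ring
      show m₀ - 1 ∈ BS.diffMonoid Γ Q
      rw [heq]
      exact AddSubmonoid.subset_closure ⟨v0 + w, hΓ.2 v0 hv0 w, v0, hv0, hv0Q, rfl⟩
    have hLm₀ : L (BS.toR m₀) = ((-j + (mQ:ℤ) * s : ℤ) : ℝ) / (mQ : ℝ) := by
      rw [Lint]
      congr 2
      have : (∑ i, β i * m₀ i) = (∑ i, β i) + ∑ i, β i * (w i : ℤ) := by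
        rw [← Finset.sum_add_distrib]
        refine Finset.sum_congr rfl (fun i _ => ?_)
        simp only [hm₀def, BS.natZ, Pi.add_apply, Pi.one_apply]
        ring
      rw [this, hs, hT]; ring
    set N : ℕ := (⌈L (BS.toR m₀) - L (BS.toR (1 : Fin n → ℤ))⌉).toNat with hN
    have hbound : L (BS.toR m₀) ≤ L (BS.toR (1 : Fin n → ℤ)) + N := by
      have h1 := Int.le_ceil (L (BS.toR m₀) - L (BS.toR (1 : Fin n → ℤ)))
      have h2 := Int.self_le_toNat ⌈L (BS.toR m₀) - L (BS.toR (1 : Fin n → ℤ))⌉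
      have h3 : ((⌈L (BS.toR m₀) - L (BS.toR (1 : Fin n → ℤ))⌉ : ℤ) : ℝ) ≤ (N : ℝ) := by
        exact_mod_cast h2
      linarith
    obtain ⟨u, hu, t, ht⟩ := descent N m₀ hm₀ hbound
    refine ⟨- L (BS.toR u), ⟨u, hu, ?_, rfl⟩, s - t + k, ?_⟩
    · rw [hspan]; trivial
    · rw [ht, hLm₀]
      push_cast
      field_simp
      ring
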